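/- Let Ω = B_R(0) be the open ball of radius R centered at the origin in ℝ^N and let ψ be a first eigenfunction of Ω. Then ψ is radially symmetric: ψ(x) = ψ(y) whenever x, y ∈ closure Ω satisfy |x| = |y|. -/

import Mathlib

open MeasureTheory Set

noncomputable section

/-- Euclidean space `ℝ^N`. -/
abbrev Euc (N : ℕ) := EuclideanSpace ℝ (Fin N)

/-- The `(N-1)`-dimensional Hausdorff (surface) measure `σ` on `ℝ^N`. -/
def surf (N : ℕ) : Measure (Euc N) := Measure.hausdorffMeasure ((N : ℝ) - 1)

/-- The Robin energy `∫_Ω |∇u|^p dx + β ∫_{∂Ω} |u|^p dσ`. -/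
def energy (N : ℕ) (p β : ℝ) (Ω : Set (Euc N)) (u : Euc N → ℝ) : ℝ :=
  (∫ x in Ω, ‖gradient u x‖ ^ p) + β * ∫ x in frontier Ω, |u x| ^ p ∂(surf N)

/-- The first Robin eigenvalue of the `p`-Laplacian on `Ω`. -/
def lambda1 (N : ℕ) (p β : ℝ) (Ω : Set (Euc N)) : ℝ :=
  sInf {v | ∃ u : Euc N → ℝ, ContDiffOn ℝ 1 u (closure Ω) ∧
      (∫ x in Ω, |u x| ^ p) = 1 ∧ v = energy N p β Ω u}

/-- `Ω` has smooth boundary: it is the sublevel set of a smooth defining function whose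
gradient does not vanish on the boundary. -/
def HasSmoothBoundary (N : ℕ) (Ω : Set (Euc N)) : Prop :=
  ∃ f : Euc N → ℝ, ContDiff ℝ (⊤ : ℕ∞) f ∧ Ω = {x | f x < 0} ∧
    frontier Ω = {x | f x = 0} ∧ ∀ x ∈ frontier Ω, gradient f x ≠ 0

/-- `ψ ∈ C¹(closure Ω)` is a weak eigenfunction of the Robin `p`-Laplacian with
eigenvalue `lam`. -/
def IsWeakEigenfunction (N : ℕ) (p β : ℝ) (Ω : Set (Euc N)) (ψ : Euc N → ℝ) (lam : ℝ) : Prop :=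
  ContDiffOn ℝ 1 ψ (closure Ω) ∧
    ∀ φ : Euc N → ℝ, ContDiffOn ℝ 1 φ (closure Ω) →
      (∫ x in Ω, ‖gradient ψ x‖ ^ (p - 2) * (inner ℝ (gradient ψ x) (gradient φ x) : ℝ)) +
          β * ∫ x in frontier Ω, |ψ x| ^ (p - 2) * ψ x * φ x ∂(surf N) =
        lam * ∫ x in Ω, |ψ x| ^ (p - 2) * ψ x * φ x

/-- A first eigenfunction: a weak eigenfunction with eigenvalue `λ₁(Ω)`, positive on
`closure Ω` and with maximum value `1` there. -/
def IsFirstEigenfunction (N : ℕ) (p β : ℝ) (Ω : Set (Euc N)) (ψ : Euc N → ℝ) : Prop :=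
  IsWeakEigenfunction N p β Ω ψ (lambda1 N p β Ω) ∧
    (∀ x ∈ closure Ω, 0 < ψ x) ∧ IsGreatest (ψ '' closure Ω) 1

/-- The functional `H_Ω(U, φ)`. -/
def Hfun (N : ℕ) (p β : ℝ) (Ω U : Set (Euc N)) (φ : Euc N → ℝ) : ℝ :=
  (volume U).toReal⁻¹ *
    ((∫ x in frontier U ∩ Ω, φ x ∂(surf N)) + β * (surf N (frontier U ∩ frontier Ω)).toReal -
      (p - 1) * ∫ x in U, φ x ^ (p / (p - 1)))

/-- The class `M_β`: continuous nonnegative functions on `Ω` with `limsup_{x→z} φ(x) ≤ β`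
for every boundary point `z`. -/
def Mbeta (N : ℕ) (β : ℝ) (Ω : Set (Euc N)) (φ : Euc N → ℝ) : Prop :=
  ContinuousOn φ Ω ∧ (∀ x ∈ Ω, 0 ≤ φ x) ∧
    ∀ z ∈ frontier Ω, Filter.limsup φ (nhdsWithin z Ω) ≤ β

section Helpers

/- core scalar inequality -/
lemma core_ineq {p : ℝ} (hp : 1 < p) {r : ℝ} (hr : 0 ≤ r) (hr1 : r ≠ 1) :
    p * r < r ^ p + (p - 1) := by
  have hp0 : (0:ℝ) < p := by linarith
  set f : ℝ → ℝ := fun r => r ^ p - p * r + (p - 1) with hf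
  have hcont : Continuous f := by
    apply Continuous.add (Continuous.sub ?_ (by continuity)) continuous_const
    rw [continuous_iff_continuousAt]
    intro x
    exact Real.continuousAt_rpow_const x p (Or.inr hp0.le)
  have hderiv : ∀ x : ℝ, x ≠ 0 → HasDerivAt f (p * x ^ (p-1) - p) x := by
    intro x hx
    simpa [hf] using ((Real.hasDerivAt_rpow_const (p := p) (Or.inl hx)).sub
      ((hasDerivAt_id x).const_mul p)).add_const (p - 1)
  have hf1 : f 1 = 0 := by simp [hf]
  have key : 0 < f r := by
    rcases lt_or_gt_of_ne hr1 with h1 | h1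
    · have anti : StrictAntiOn f (Icc 0 1) := by
        apply strictAntiOn_of_deriv_neg (convex_Icc 0 1) (hcont.continuousOn)
        intro x hx
        rw [interior_Icc] at hx
        rw [(hderiv x (ne_of_gt hx.1)).deriv]
        have : x ^ (p - 1) < 1 := by
          calc x ^ (p-1) < 1 ^ (p-1) := Real.rpow_lt_rpow hx.1.le hx.2 (by linarith)
          _ = 1 := Real.one_rpow _
        nlinarith
      have := anti (by constructor <;> [exact hr; exact h1.le]) (by norm_num) h1
      rwa [hf1] at this
    · have mono : StrictMonoOn f (Ici 1) := by
        apply strictMonoOn_of_deriv_pos (convex_Ici 1) (hcont.continuousOn)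
        intro x hx
        rw [interior_Ici] at hx
        rw [(hderiv x (by intro h; rw [h] at hx; exact absurd hx (by norm_num))).deriv]
        have : (1:ℝ) < x ^ (p - 1) := by
          calc (1:ℝ) = 1 ^ (p-1) := (Real.one_rpow _).symm
          _ < x ^ (p-1) := Real.rpow_lt_rpow (by norm_num) hx (by linarith)
        nlinarith
      have := mono (by norm_num) (le_of_lt h1) h1
      rwa [hf1] at this
  simp only [hf] at key
  linarith

/-- Young's inequality with equality case. -/
lemma young_eq {p : ℝ} (hp : 1 < p) {A B : ℝ} (hA : 0 ≤ A) (hB : 0 ≤ B) :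
    p * (A ^ (p-1) * B) ≤ (p - 1) * A ^ p + B ^ p ∧
      (p * (A ^ (p-1) * B) = (p - 1) * A ^ p + B ^ p → A = B) := by
  have hp0 : (0:ℝ) < p := by linarith
  rcases eq_or_lt_of_le hA with h0 | hApos
  · rw [← h0]
    rw [Real.zero_rpow (by linarith : p - 1 ≠ 0), Real.zero_rpow (ne_of_gt hp0)]
    constructor
    · simpa using Real.rpow_nonneg hB p
    · intro h
      simp only [mul_zero, zero_mul, mul_zero, zero_add] at h
      have : B = 0 := by
        by_contra hB0
        have : (0:ℝ) < B := lt_of_le_of_ne hB (Ne.symm hB0)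
        exact absurd h.symm (ne_of_gt (Real.rpow_pos_of_pos this p))
      simp [this]
  · set r := B / A with hr
    have hrnn : 0 ≤ r := div_nonneg hB hApos.le
    have hAp : (0:ℝ) < A ^ p := Real.rpow_pos_of_pos hApos p
    have hBr : B = r * A := by rw [hr, div_mul_cancel₀ B (ne_of_gt hApos)]
    have hrp : r ^ p * A ^ p = B ^ p := by
      rw [← Real.mul_rpow hrnn hApos.le, ← hBr]
    have hA1 : A ^ (p - 1) * A = A ^ p := by
      rw [← Real.rpow_add_one (ne_of_gt hApos)]; ring_nf
    have key : p * r ≤ r ^ p + (p - 1) ∧ (p * r = r ^ p + (p-1) → r = 1) := by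
      rcases eq_or_ne r 1 with h1 | h1
      · rw [h1]; simp
      · exact ⟨(core_ineq hp hrnn h1).le, fun h => absurd h (ne_of_lt (core_ineq hp hrnn h1))⟩
    have lhs_eq : p * (A ^ (p-1) * B) = (p * r) * A ^ p := by
      rw [hBr]; rw [← hA1]; ring
    have rhs_eq : (p - 1) * A ^ p + B ^ p = (r ^ p + (p - 1)) * A ^ p := by
      rw [← hrp]; ring
    constructor
    · rw [lhs_eq, rhs_eq]
      exact mul_le_mul_of_nonneg_right key.1 hAp.le
    · intro h
      rw [lhs_eq, rhs_eq] at h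
      have : p * r = r ^ p + (p - 1) := mul_right_cancel₀ (ne_of_gt hAp) h
      have := key.2 this
      rw [hBr, this, one_mul]

lemma norm_rpow_sub_two_mul_sq {F : Type*} [NormedAddCommGroup F] [InnerProductSpace ℝ F]
    {p : ℝ} (hp : 1 < p) (a : F) :
    ‖a‖ ^ (p-2) * (inner ℝ a a : ℝ) = ‖a‖ ^ p := by
  rw [real_inner_self_eq_norm_sq]
  rcases eq_or_ne a 0 with h | h
  · simp [h, Real.zero_rpow (ne_of_gt (by linarith : (0:ℝ) < p))]
  · have hn : (0:ℝ) < ‖a‖ := norm_pos_iff.mpr h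
    rw [sq, show ‖a‖ * ‖a‖ = ‖a‖ ^ (1:ℝ) * ‖a‖ ^ (1:ℝ) by rw [Real.rpow_one],
      ← Real.rpow_add hn, ← Real.rpow_add hn]
    ring_nf

/-- Pointwise Picone inequality with equality case. -/
lemma picone_pointwise {F : Type*} [NormedAddCommGroup F] [InnerProductSpace ℝ F]
    {p : ℝ} (hp : 1 < p) {u v : ℝ} (hu : 0 < u) (hv : 0 < v) (a b : F) :
    ‖a‖ ^ (p-2) * (inner ℝ a ((p * (v^(p-1) * u^(1-p))) • b + (((1-p) * (v^p * u^(-p)))) • a) : ℝ)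
      ≤ ‖b‖^p ∧
    (‖a‖ ^ (p-2) * (inner ℝ a ((p * (v^(p-1) * u^(1-p))) • b + (((1-p) * (v^p * u^(-p)))) • a) : ℝ)
      = ‖b‖^p → u • b = v • a) := by
  set τ := v / u with hτdef
  have hτ : 0 < τ := div_pos hv hu
  have hτ1 : v^(p-1) * u^(1-p) = τ^(p-1) := by
    rw [hτdef, Real.div_rpow hv.le hu.le]
    rw [show (1-p) = -(p-1) by ring, Real.rpow_neg hu.le]
    ring
  have hτ2 : v^p * u^(-p) = τ^p := by
    rw [hτdef, Real.div_rpow hv.le hu.le, Real.rpow_neg hu.le]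
    ring
  rw [hτ1, hτ2]
  set L := ‖a‖ ^ (p-2) * (inner ℝ a ((p * τ^(p-1)) • b + ((1-p) * τ^p) • a) : ℝ) with hL
  have hLexp : L = (p * τ^(p-1)) * (‖a‖^(p-2) * (inner ℝ a b : ℝ))
      - (p-1) * τ^p * ‖a‖^p := by
    rw [hL, inner_add_right, real_inner_smul_right, real_inner_smul_right,
      mul_add]
    rw [show ‖a‖ ^ (p-2) * ((1-p) * τ^p * (inner ℝ a a : ℝ))
        = (1-p) * τ^p * (‖a‖^(p-2) * (inner ℝ a a : ℝ)) by ring,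
      norm_rpow_sub_two_mul_sq hp a]
    ring
  have hsuf : b = τ • a → u • b = v • a := by
    intro h
    rw [h, smul_smul, hτdef, mul_div_cancel₀ v (ne_of_gt hu)]
  rcases eq_or_ne a 0 with ha | ha
  · have hL0 : L = 0 := by
      rw [hL, ha]
      simp
    constructor
    · rw [hL0]; exact Real.rpow_nonneg (norm_nonneg b) p
    · intro h
      rw [hL0] at h
      have hb : ‖b‖ = 0 := by
        by_contra hb0
        have : (0:ℝ) < ‖b‖ := lt_of_le_of_ne (norm_nonneg b) (Ne.symm hb0)
        exact absurd h.symm (ne_of_gt (Real.rpow_pos_of_pos this p))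
      rw [norm_eq_zero] at hb
      rw [ha, hb, smul_zero, smul_zero]
  · have hna : (0:ℝ) < ‖a‖ := norm_pos_iff.mpr ha
    have hnap : (0:ℝ) < ‖a‖ ^ (p-2) := Real.rpow_pos_of_pos hna _
    set A := τ * ‖a‖ with hA
    set B := ‖b‖ with hB
    have hAnn : 0 ≤ A := by positivity
    have hBnn : 0 ≤ B := norm_nonneg b
    have hA1 : τ^(p-1) * ‖a‖^(p-1) = A^(p-1) := (Real.mul_rpow hτ.le hna.le).symm
    have hA2 : τ^p * ‖a‖^p = A^p := (Real.mul_rpow hτ.le hna.le).symm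
    have hnapm : ‖a‖^(p-2) * ‖a‖ = ‖a‖^(p-1) := by
      nth_rewrite 2 [← Real.rpow_one ‖a‖]
      rw [← Real.rpow_add hna]
      ring_nf
    have young := young_eq hp hAnn hBnn
    have cs : (inner ℝ a b : ℝ) ≤ ‖a‖ * ‖b‖ := real_inner_le_norm a b
    have hM : L ≤ p * (A^(p-1) * B) - (p-1) * A^p := by
      rw [hLexp, ← hA1, ← hA2]
      have h1 : ‖a‖^(p-2) * (inner ℝ a b : ℝ) ≤ ‖a‖^(p-1) * B := by
        calc ‖a‖^(p-2) * (inner ℝ a b : ℝ) ≤ ‖a‖^(p-2) * (‖a‖ * ‖b‖) :=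
          mul_le_mul_of_nonneg_left cs hnap.le
        _ = ‖a‖^(p-1) * B := by rw [← hnapm]; ring
      have h2 := mul_le_mul_of_nonneg_left h1
        (show (0:ℝ) ≤ p * τ^(p-1) by positivity)
      linarith
    constructor
    · calc L ≤ p * (A^(p-1) * B) - (p-1) * A^p := hM
      _ ≤ B ^ p := by linarith [young.1]
    · intro hEq
      have hMeq : p * (A^(p-1) * B) - (p-1) * A^p = B^p :=
        le_antisymm (by linarith [young.1]) (by linarith [hM, hEq.ge, hEq.le])
      have hAB : A = B := young.2 (by linarith)
      have hcs_eq : (inner ℝ a b : ℝ) = ‖a‖ * ‖b‖ := by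
        by_contra hne
        have hlt : (inner ℝ a b : ℝ) < ‖a‖ * ‖b‖ := lt_of_le_of_ne cs hne
        have hstrict : L < p * (A^(p-1) * B) - (p-1) * A^p := by
          rw [hLexp, ← hA1, ← hA2]
          have h1 : ‖a‖^(p-2) * (inner ℝ a b : ℝ) < ‖a‖^(p-1) * B := by
            calc ‖a‖^(p-2) * (inner ℝ a b : ℝ) < ‖a‖^(p-2) * (‖a‖ * ‖b‖) :=
              (mul_lt_mul_iff_right₀ hnap).mpr hlt
            _ = ‖a‖^(p-1) * B := by rw [← hnapm]; ring
          have h2 := (mul_lt_mul_iff_right₀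
            (show (0:ℝ) < p * τ^(p-1) by positivity)).mpr h1
          linarith
        linarith [young.1, hEq.le]
      apply hsuf
      rw [inner_eq_norm_mul_iff_real] at hcs_eq
      have hBA : ‖b‖ = τ * ‖a‖ := hAB.symm
      rw [hBA] at hcs_eq
      have : ‖a‖ • b = ‖a‖ • (τ • a) := by
        rw [smul_smul, mul_comm ‖a‖ τ, hcs_eq]
      exact smul_right_injective F (ne_of_gt hna) this

/-- positive scalar helpers -/
lemma abs_helper1 {p t : ℝ} (hp : 1 < p) (ht : 0 < t) :
    |t| ^ (p-2) * t * t = t ^ p := by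
  rw [abs_of_pos ht]
  rw [show t ^ (p-2) * t * t = t^(p-2) * t^(1:ℝ) * t^(1:ℝ) by rw [Real.rpow_one],
    ← Real.rpow_add ht, ← Real.rpow_add ht]
  ring_nf

lemma abs_helper2 {p t s : ℝ} (hp : 1 < p) (ht : 0 < t) (hs : 0 < s) :
    |t| ^ (p-2) * t * (s ^ p * t ^ (1-p)) = s ^ p := by
  rw [abs_of_pos ht]
  rw [show t ^ (p-2) * t * (s^p * t^(1-p)) = s^p * (t^(p-2) * t^(1:ℝ) * t^(1-p)) by
    rw [Real.rpow_one]; ring, ← Real.rpow_add ht, ← Real.rpow_add ht]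
  rw [show p - 2 + 1 + (1 - p) = 0 by ring, Real.rpow_zero, mul_one]

/-- continuity of w ↦ ‖w‖^(p-2) • w -/
lemma continuous_normSmul {F : Type*} [NormedAddCommGroup F] [InnerProductSpace ℝ F]
    {p : ℝ} (hp : 1 < p) :
    Continuous (fun w : F => ‖w‖ ^ (p-2) • w) := by
  rw [continuous_iff_continuousAt]
  intro w0
  rcases eq_or_ne w0 0 with h0 | h0
  · rw [h0, ContinuousAt]
    have hzero : ‖(0:F)‖ ^ (p-2) • (0:F) = 0 := smul_zero _
    rw [hzero]
    have hbound : ∀ w : F, ‖‖w‖ ^ (p-2) • w‖ ≤ ‖w‖ ^ (p-1) := by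
      intro w
      rcases eq_or_ne w 0 with hw | hw
      · simp [hw, Real.rpow_nonneg]
      · have hnw : (0:ℝ) < ‖w‖ := norm_pos_iff.mpr hw
        rw [norm_smul, Real.norm_eq_abs, abs_of_nonneg (Real.rpow_nonneg (norm_nonneg w) _)]
        rw [show ‖w‖^(p-2) * ‖w‖ = ‖w‖^(p-2) * ‖w‖^(1:ℝ) by rw [Real.rpow_one],
          ← Real.rpow_add hnw]
        ring_nf
        exact le_refl _
    have hlim : Filter.Tendsto (fun w : F => ‖w‖ ^ (p-1)) (nhds 0) (nhds 0) := by
      have h1 : ContinuousAt (fun t : ℝ => t ^ (p-1)) ‖(0:F)‖ := by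
        rw [norm_zero]
        exact Real.continuousAt_rpow_const 0 (p-1) (Or.inr (by linarith))
      have h2 := h1.comp continuous_norm.continuousAt
      rw [ContinuousAt] at h2
      simp only [Function.comp, norm_zero,
        Real.zero_rpow (by linarith : p - 1 ≠ 0)] at h2
      exact h2
    exact squeeze_zero_norm hbound hlim
  · have hnw : (0:ℝ) < ‖w0‖ := norm_pos_iff.mpr h0
    have h1 : ContinuousAt (fun w : F => ‖w‖ ^ (p-2)) w0 :=
      (Real.continuousAt_rpow_const ‖w0‖ (p-2) (Or.inl (ne_of_gt hnw))).comp
        continuous_norm.continuousAt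
    exact h1.smul continuous_id.continuousAt

/-- integral positivity lemma -/
lemma eq_zero_of_setIntegral_zero {N : ℕ} {U : Set (Euc N)} (hU : IsOpen U)
    {f : Euc N → ℝ} (hf : ContinuousOn f U) (hnn : ∀ x ∈ U, 0 ≤ f x)
    (hint : IntegrableOn f U volume) (hzero : (∫ x in U, f x) = 0) :
    ∀ x ∈ U, f x = 0 := by
  intro x0 hx0
  by_contra hne
  have hfx : 0 < f x0 := lt_of_le_of_ne (hnn x0 hx0) (Ne.symm hne)
  -- find a small ball where f > f x0 / 2
  have hcw : ContinuousAt f x0 := hf.continuousAt (hU.mem_nhds hx0)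
  have hev : ∀ᶠ y in nhds x0, f x0 / 2 < f y :=
    continuousAt_const.eventually_lt hcw (by linarith)
  obtain ⟨ε, hε, hball⟩ := Metric.eventually_nhds_iff_ball.mp hev
  obtain ⟨δ, hδ, hδball⟩ := Metric.isOpen_iff.mp hU x0 hx0
  set r := min ε δ with hrdef
  have hr : 0 < r := lt_min hε hδ
  have hsub : Metric.ball x0 r ⊆ U := fun y hy =>
    hδball (Metric.ball_subset_ball (min_le_right ε δ) hy)
  have hsubε : Metric.ball x0 r ⊆ Metric.ball x0 ε := Metric.ball_subset_ball (min_le_left ε δ)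
  have hlow : f x0 / 2 * (volume (Metric.ball x0 r)).toReal ≤ ∫ y in Metric.ball x0 r, f y := by
    apply MeasureTheory.setIntegral_ge_of_const_le_real measurableSet_ball
      (ne_of_lt measure_ball_lt_top)
    · exact fun y hy => (hball y (hsubε hy)).le
    · exact hint.mono_set hsub
  have hmono : (∫ y in Metric.ball x0 r, f y) ≤ ∫ y in U, f y := by
    apply MeasureTheory.setIntegral_mono_set hint
    · filter_upwards [MeasureTheory.ae_restrict_mem hU.measurableSet] with y hy
      exact hnn y hy
    · exact HasSubset.Subset.eventuallyLE hsub
  have hvol : 0 < (volume (Metric.ball x0 r)).toReal :=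
    ENNReal.toReal_pos (ne_of_gt (Metric.measure_ball_pos volume x0 hr))
      (ne_of_lt measure_ball_lt_top)
  nlinarith

end Helpers

section Key

open InnerProductSpace

set_option maxHeartbeats 2000000 in
lemma key_reflect {N : ℕ} (hN : 2 ≤ N) {p β R : ℝ} (hp : 1 < p) (hR : 0 < R)
    {ψ : Euc N → ℝ} (hψ : IsFirstEigenfunction N p β (Metric.ball (0 : Euc N) R) ψ)
    (O : Euc N ≃ₗᵢ[ℝ] Euc N) :
    ∀ z ∈ closure (Metric.ball (0 : Euc N) R), ψ (O z) = ψ z := by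
  haveI : Nonempty (Fin N) := ⟨⟨0, by omega⟩⟩
  obtain ⟨⟨hC1, hweak⟩, hpos, -⟩ := hψ
  set Ω : Set (Euc N) := Metric.ball (0 : Euc N) R with hΩ
  set S : Set (Euc N) := closure Ω with hSdef
  have hS : S = Metric.closedBall 0 R := closure_ball 0 (ne_of_gt hR)
  have hΩopen : IsOpen Ω := Metric.isOpen_ball
  have hΩS : Ω ⊆ S := subset_closure
  have hcomp : IsCompact S := by rw [hS]; exact isCompact_closedBall 0 R
  have hconv : Convex ℝ Ω := convex_ball 0 R
  have hud : UniqueDiffOn ℝ S := by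
    rw [hS]
    exact uniqueDiffOn_convex (convex_closedBall 0 R)
      (by rw [interior_closedBall 0 (ne_of_gt hR)]; exact ⟨0, Metric.mem_ball_self hR⟩)
  have hOS : ∀ z ∈ S, O z ∈ S := by
    rw [hS]
    intro z hz
    rw [Metric.mem_closedBall, dist_zero_right] at *
    rwa [O.norm_map]
  have hOΩ : ∀ z ∈ Ω, O z ∈ Ω := by
    intro z hz
    rw [hΩ, Metric.mem_ball, dist_zero_right] at *
    rwa [O.norm_map]
  have hOΩpre : ⇑O ⁻¹' Ω = Ω := by
    ext z
    simp only [mem_preimage, hΩ, Metric.mem_ball, dist_zero_right, O.norm_map]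
  have hfr : frontier Ω = Metric.sphere 0 R := frontier_ball 0 (ne_of_gt hR)
  have hfrS : frontier Ω ⊆ S := by
    rw [hSdef]; exact frontier_subset_closure
  have hOfr : ⇑O ⁻¹' (frontier Ω) = frontier Ω := by
    rw [hfr]
    ext z
    simp only [mem_preimage, Metric.mem_sphere, dist_zero_right, O.norm_map]
  have hmΩ : MeasurableSet Ω := hΩopen.measurableSet
  have hmfr : MeasurableSet (frontier Ω) := isClosed_frontier.measurableSet
  -- the composed function
  set v : Euc N → ℝ := fun z => ψ (O z) with hv
  have vpos : ∀ z ∈ S, 0 < v z := fun z hz => hpos _ (hOS z hz)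
  have hOcd : ContDiff ℝ 1 (fun z : Euc N => (O z : Euc N)) := by
    have := (O.toContinuousLinearEquiv : Euc N ≃L[ℝ] Euc N).toContinuousLinearMap.contDiff
      (n := (1 : ℕ∞))
    exact this
  have hvC1 : ContDiffOn ℝ 1 v S :=
    ContDiffOn.comp hC1 (hOcd.contDiffOn) (fun z hz => hOS z hz)
  -- the within gradient
  set toD := InnerProductSpace.toDual ℝ (Euc N) with htoD
  set G : Euc N → Euc N := fun z => toD.symm (fderivWithin ℝ ψ S z) with hG
  have hGcont : ContinuousOn G S :=
    toD.symm.continuous.comp_continuousOn (hC1.continuousOn_fderivWithin hud le_rfl)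
  have hSnhds : ∀ z ∈ Ω, S ∈ nhds z := fun z hz =>
    mem_nhds_iff.mpr ⟨Ω, hΩS, hΩopen, hz⟩
  have hgrad : ∀ z ∈ Ω, HasGradientAt ψ (G z) z := by
    intro z hz
    have hd : DifferentiableAt ℝ ψ z := (hC1.contDiffAt (hSnhds z hz)).differentiableAt one_ne_zero
    have hGz : G z = gradient ψ z := by
      rw [hG]
      simp only [gradient, fderivWithin_of_mem_nhds (hSnhds z hz)]
      rfl
    rw [hGz]
    exact hd.hasGradientAt
  set Gv : Euc N → Euc N := fun z => O.symm (G (O z)) with hGv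
  have hGvcont : ContinuousOn Gv S :=
    O.symm.continuous.comp_continuousOn
      (hGcont.comp O.continuous.continuousOn (fun z hz => hOS z hz))
  have hdual : ∀ g : Euc N, (toD (O.symm g)) =
      (toD g).comp (O.toContinuousLinearEquiv : Euc N ≃L[ℝ] Euc N).toContinuousLinearMap := by
    intro g
    ext h
    simp only [htoD, InnerProductSpace.toDual_apply_apply, ContinuousLinearMap.coe_comp',
      Function.comp_apply, ContinuousLinearEquiv.coe_coe]
    have : (inner ℝ (O.symm g) h : ℝ) = inner ℝ (O (O.symm g)) (O h) := (O.inner_map_map _ _).symm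
    rw [this, O.apply_symm_apply]
    rfl
  have hgradv : ∀ z ∈ Ω, HasGradientAt v (Gv z) z := by
    intro z hz
    have hOz : O z ∈ Ω := hOΩ z hz
    have h1 : HasFDerivAt ψ (toD (G (O z))) (O z) :=
      hasGradientAt_iff_hasFDerivAt.mp (hgrad _ hOz)
    have hO' : HasFDerivAt (fun w : Euc N => (O w : Euc N))
        (O.toContinuousLinearEquiv : Euc N ≃L[ℝ] Euc N).toContinuousLinearMap z :=
      (O.toContinuousLinearEquiv : Euc N ≃L[ℝ] Euc N).toContinuousLinearMap.hasFDerivAt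
    have h2 := h1.comp z hO'
    rw [hasGradientAt_iff_hasFDerivAt]
    rw [hGv, hdual (G (O z))]
    exact h2
  -- the Picone test function
  set wf : Euc N → ℝ := fun z => (v z) ^ p * (ψ z) ^ (1-p) with hwf
  have hwC1 : ContDiffOn ℝ 1 wf S :=
    (hvC1.rpow_const_of_ne (fun z hz => ne_of_gt (vpos z hz))).mul
      (hC1.rpow_const_of_ne (fun z hz => ne_of_gt (hpos z hz)))
  set W : Euc N → Euc N := fun z =>
    (p * ((v z)^(p-1) * (ψ z)^(1-p))) • Gv z + (((1-p) * ((v z)^p * (ψ z)^(-p)))) • G z with hW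
  have hWcont : ContinuousOn W S := by
    apply ContinuousOn.add
    · apply ContinuousOn.fun_smul ?_ hGvcont
      apply continuousOn_const.mul
      exact ((hvC1.continuousOn).rpow_const
          (fun z hz => Or.inl (ne_of_gt (vpos z hz)))).mul
        ((hC1.continuousOn).rpow_const (fun z hz => Or.inl (ne_of_gt (hpos z hz))))
    · apply ContinuousOn.fun_smul ?_ hGcont
      apply continuousOn_const.mul
      exact ((hvC1.continuousOn).rpow_const
          (fun z hz => Or.inl (ne_of_gt (vpos z hz)))).mul
        ((hC1.continuousOn).rpow_const (fun z hz => Or.inl (ne_of_gt (hpos z hz))))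
  have hgradw : ∀ z ∈ Ω, HasGradientAt wf (W z) z := by
    intro z hz
    have hzS := hΩS hz
    have hu' : HasFDerivAt ψ (toD (G z)) z := hasGradientAt_iff_hasFDerivAt.mp (hgrad z hz)
    have hv' : HasFDerivAt v (toD (Gv z)) z := hasGradientAt_iff_hasFDerivAt.mp (hgradv z hz)
    have h1 : HasFDerivAt (fun y => (v y)^p) ((p * (v z)^(p-1)) • toD (Gv z)) z :=
      hv'.rpow_const (Or.inl (ne_of_gt (vpos z hzS)))
    have h2 : HasFDerivAt (fun y => (ψ y)^(1-p)) (((1-p) * (ψ z)^(1-p-1)) • toD (G z)) z :=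
      hu'.rpow_const (Or.inl (ne_of_gt (hpos z hzS)))
    have h3 := h1.mul h2
    rw [hasGradientAt_iff_hasFDerivAt]
    have hWz : toD (W z) = (v z)^p • (((1-p) * (ψ z)^(1-p-1)) • toD (G z))
        + (ψ z)^(1-p) • ((p * (v z)^(p-1)) • toD (Gv z)) := by
      rw [hW]
      rw [show (1:ℝ) - p - 1 = -p by ring]
      simp only [map_add, _root_.map_smul]
      module
    rw [hWz]
    exact h3
  -- two instances of the weak equation
  set lam := lambda1 N p β Ω with hlam
  have eqI := hweak ψ hC1
  have eqII := hweak wf hwC1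
  have s1 : (∫ x in Ω, ‖gradient ψ x‖^(p-2) * (inner ℝ (gradient ψ x) (gradient ψ x) : ℝ))
      = ∫ x in Ω, ‖G x‖^p := by
    apply setIntegral_congr_fun hmΩ
    intro x hx
    simp only [(hgrad x hx).gradient]
    exact norm_rpow_sub_two_mul_sq hp (G x)
  have s2 : (∫ x in frontier Ω, |ψ x|^(p-2) * ψ x * ψ x ∂(surf N))
      = ∫ x in frontier Ω, (ψ x)^p ∂(surf N) :=
    setIntegral_congr_fun hmfr (fun x hx => abs_helper1 hp (hpos x (hfrS hx)))
  have s3 : (∫ x in Ω, |ψ x|^(p-2) * ψ x * ψ x) = ∫ x in Ω, (ψ x)^p :=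
    setIntegral_congr_fun hmΩ (fun x hx => abs_helper1 hp (hpos x (hΩS hx)))
  rw [s1, s2, s3] at eqI
  have s4 : (∫ x in Ω, ‖gradient ψ x‖^(p-2) * (inner ℝ (gradient ψ x) (gradient wf x) : ℝ))
      = ∫ x in Ω, ‖G x‖^(p-2) * (inner ℝ (G x) (W x) : ℝ) := by
    apply setIntegral_congr_fun hmΩ
    intro x hx
    simp only [(hgrad x hx).gradient, (hgradw x hx).gradient]
  have s5 : (∫ x in frontier Ω, |ψ x|^(p-2) * ψ x * wf x ∂(surf N))
      = ∫ x in frontier Ω, (v x)^p ∂(surf N) :=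
    setIntegral_congr_fun hmfr
      (fun x hx => abs_helper2 hp (hpos x (hfrS hx)) (vpos x (hfrS hx)))
  have s6 : (∫ x in Ω, |ψ x|^(p-2) * ψ x * wf x) = ∫ x in Ω, (v x)^p :=
    setIntegral_congr_fun hmΩ
      (fun x hx => abs_helper2 hp (hpos x (hΩS hx)) (vpos x (hΩS hx)))
  rw [s4, s5, s6] at eqII
  -- change of variables
  have mpV : MeasurePreserving (⇑O) volume volume := O.measurePreserving
  have membO : MeasurableEmbedding (⇑O) := O.toHomeomorph.measurableEmbedding
  have mpS : MeasurePreserving (⇑O) (surf N) (surf N) := by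
    refine ⟨O.continuous.measurable, ?_⟩
    refine Measure.ext fun s hs => ?_
    rw [Measure.map_apply O.continuous.measurable hs]
    have himg : (⇑O) ⁻¹' s = (⇑O.symm) '' s := by
      ext z
      simp only [mem_preimage, mem_image]
      constructor
      · intro h; exact ⟨O z, h, O.symm_apply_apply z⟩
      · rintro ⟨w, hw, rfl⟩; rwa [O.apply_symm_apply]
    rw [himg]
    exact O.symm.isometry.hausdorffMeasure_image (Or.inr O.symm.surjective) s
  have cov1 : (∫ x in Ω, ‖G (O x)‖^p) = ∫ x in Ω, ‖G x‖^p := by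
    have := mpV.setIntegral_preimage_emb membO (fun x => ‖G x‖^p) Ω
    rwa [hOΩpre] at this
  have cov2 : (∫ x in frontier Ω, (ψ (O x))^p ∂(surf N))
      = ∫ x in frontier Ω, (ψ x)^p ∂(surf N) := by
    have := mpS.setIntegral_preimage_emb membO (fun x => (ψ x)^p) (frontier Ω)
    rwa [hOfr] at this
  have cov3 : (∫ x in Ω, (ψ (O x))^p) = ∫ x in Ω, (ψ x)^p := by
    have := mpV.setIntegral_preimage_emb membO (fun x => (ψ x)^p) Ω
    rwa [hOΩpre] at this
  have EII : (∫ x in Ω, ‖Gv x‖^p) + β * ∫ x in frontier Ω, (v x)^p ∂(surf N)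
      = lam * ∫ x in Ω, (v x)^p := by
    have e1 : (∫ x in Ω, ‖Gv x‖^p) = ∫ x in Ω, ‖G (O x)‖^p := by
      simp only [hGv, LinearIsometryEquiv.norm_map]
    rw [e1, cov1]
    have e2 : (∫ x in frontier Ω, (v x)^p ∂(surf N))
        = ∫ x in frontier Ω, (ψ (O x))^p ∂(surf N) := rfl
    have e3 : (∫ x in Ω, (v x)^p) = ∫ x in Ω, (ψ (O x))^p := rfl
    rw [e2, cov2, e3, cov3]
    exact eqI
  -- integrability
  have hif2 : IntegrableOn (fun x => ‖Gv x‖^p) Ω volume := by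
    apply IntegrableOn.mono_set ?_ hΩS
    exact (ContinuousOn.rpow_const hGvcont.norm
      (fun x hx => Or.inr (by linarith))).integrableOn_compact hcomp
  have hif1 : IntegrableOn (fun x => ‖G x‖^(p-2) * (inner ℝ (G x) (W x) : ℝ)) Ω volume := by
    have hcont : ContinuousOn (fun x => (inner ℝ (‖G x‖^(p-2) • G x) (W x) : ℝ)) S :=
      ContinuousOn.inner (𝕜 := ℝ)
        ((continuous_normSmul hp).comp_continuousOn hGcont) hWcont
    have h2 : IntegrableOn (fun x => (inner ℝ (‖G x‖^(p-2) • G x) (W x) : ℝ)) S volume :=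
      hcont.integrableOn_compact hcomp
    simpa only [real_inner_smul_left] using h2.mono_set hΩS
  have hAA : (∫ x in Ω, ‖Gv x‖^p) = ∫ x in Ω, ‖G x‖^(p-2) * (inner ℝ (G x) (W x) : ℝ) := by
    linarith [EII, eqII]
  have hzero : (∫ x in Ω, (‖Gv x‖^p - ‖G x‖^(p-2) * (inner ℝ (G x) (W x) : ℝ))) = 0 := by
    rw [integral_sub hif2 hif1]
    rw [hAA]
    ring
  -- the Picone integrand is nonnegative
  have hpic : ∀ z ∈ S, ‖G z‖^(p-2) * (inner ℝ (G z) (W z) : ℝ) ≤ ‖Gv z‖^p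
      ∧ (‖G z‖^(p-2) * (inner ℝ (G z) (W z) : ℝ) = ‖Gv z‖^p → ψ z • Gv z = v z • G z) := by
    intro z hz
    have := picone_pointwise hp (hpos z hz) (vpos z hz) (G z) (Gv z)
    rw [hW]
    exact this
  have hDcont : ContinuousOn
      (fun x => ‖Gv x‖^p - ‖G x‖^(p-2) * (inner ℝ (G x) (W x) : ℝ)) S := by
    apply ContinuousOn.sub
    · exact ContinuousOn.rpow_const hGvcont.norm (fun x hx => Or.inr (by linarith))
    · apply ContinuousOn.congr
        (ContinuousOn.inner (𝕜 := ℝ)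
          ((continuous_normSmul hp).comp_continuousOn hGcont) hWcont)
      intro x hx
      exact (real_inner_smul_left _ _ _).symm
  have hDzero : ∀ z ∈ Ω,
      ‖Gv z‖^p - ‖G z‖^(p-2) * (inner ℝ (G z) (W z) : ℝ) = 0 := by
    apply eq_zero_of_setIntegral_zero hΩopen (hDcont.mono hΩS)
      (fun z hz => by linarith [(hpic z (hΩS hz)).1]) (hif2.sub hif1) hzero
  have hEq : ∀ z ∈ Ω, ψ z • Gv z = v z • G z := by
    intro z hz
    exact (hpic z (hΩS hz)).2 (by linarith [hDzero z hz])
  -- the quotient v/ψ has vanishing derivative on Ω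
  set q : Euc N → ℝ := fun z => v z * (ψ z)⁻¹ with hq
  have hq0 : ∀ z ∈ Ω, HasFDerivAt q (0 : Euc N →L[ℝ] ℝ) z := by
    intro z hz
    have hzS := hΩS hz
    have hne : ψ z ≠ 0 := ne_of_gt (hpos z hzS)
    have hu' : HasFDerivAt ψ (toD (G z)) z := hasGradientAt_iff_hasFDerivAt.mp (hgrad z hz)
    have hv' : HasFDerivAt v (toD (Gv z)) z := hasGradientAt_iff_hasFDerivAt.mp (hgradv z hz)
    have hinv : HasFDerivAt (fun y => (ψ y)⁻¹) ((-(ψ z ^ 2)⁻¹) • toD (G z)) z :=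
      (hasDerivAt_inv hne).comp_hasFDerivAt z hu'
    have hmul := hv'.mul hinv
    have hGveq : toD (Gv z) = ((ψ z)⁻¹ * v z) • toD (G z) := by
      ext w
      simp only [htoD, InnerProductSpace.toDual_apply_apply, ContinuousLinearMap.coe_smul',
        Pi.smul_apply, smul_eq_mul]
      have h2 : (inner ℝ (ψ z • Gv z) w : ℝ) = inner ℝ (v z • G z) w := by rw [hEq z hz]
      rw [real_inner_smul_left, real_inner_smul_left] at h2
      rw [mul_assoc, ← h2]
      field_simp
    have hzero' : v z • ((-(ψ z^2)⁻¹) • toD (G z)) + (ψ z)⁻¹ • toD (Gv z)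
        = (0 : Euc N →L[ℝ] ℝ) := by
      rw [hGveq, smul_smul, smul_smul]
      rw [← add_smul]
      rw [show v z * -(ψ z ^ 2)⁻¹ + (ψ z)⁻¹ * ((ψ z)⁻¹ * v z) = 0 by
        field_simp; ring]
      exact zero_smul _ _
    rw [← hzero']
    exact hmul
  have h0 : (0 : Euc N) ∈ Ω := Metric.mem_ball_self hR
  have hconst : ∀ z ∈ Ω, q z = q 0 := by
    intro z hz
    have hb := hconv.norm_image_sub_le_of_norm_hasFDerivWithin_le
      (fun y hy => (hq0 y hy).hasFDerivWithinAt) (C := 0)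
      (fun y hy => by simp) h0 hz
    simp only [zero_mul] at hb
    have : ‖q z - q 0‖ = 0 := le_antisymm hb (norm_nonneg _)
    rwa [norm_eq_zero, sub_eq_zero] at this
  have hveq : ∀ z ∈ Ω, v z = ψ z := by
    intro z hz
    have h1 := hconst z hz
    have hO0 : (O 0 : Euc N) = 0 := map_zero O
    have hq00 : q 0 = 1 := by
      simp only [hq, hv, hO0]
      exact mul_inv_cancel₀ (ne_of_gt (hpos 0 (hΩS h0)))
    rw [hq00] at h1
    have hne : ψ z ≠ 0 := ne_of_gt (hpos z (hΩS hz))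
    simp only [hq] at h1
    field_simp at h1
    exact h1
  -- extend to the closure
  intro z hz
  have hnb : (nhdsWithin z Ω).NeBot := mem_closure_iff_nhdsWithin_neBot.mp hz
  have tu : Filter.Tendsto ψ (nhdsWithin z Ω) (nhds (ψ z)) :=
    ((hC1.continuousOn z hz).mono hΩS)
  have tv : Filter.Tendsto v (nhdsWithin z Ω) (nhds (v z)) :=
    ((hvC1.continuousOn z hz).mono hΩS)
  have hev : v =ᶠ[nhdsWithin z Ω] ψ := by
    filter_upwards [self_mem_nhdsWithin] with y hy
    exact hveq y hy
  exact tendsto_nhds_unique (tv.congr' hev) tu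

end Key


/-- On a ball centered at the origin, the first eigenfunction is radially symmetric. -/
theorem first_eigenfunction_radial (N : ℕ) (hN : 2 ≤ N) (p β : ℝ) (hp : 1 < p) (hβ : 0 < β)
    (R : ℝ) (hR : 0 < R) (ψ : Euc N → ℝ)
    (hψ : IsFirstEigenfunction N p β (Metric.ball (0 : Euc N) R) ψ) :
    ∀ x ∈ closure (Metric.ball (0 : Euc N) R), ∀ y ∈ closure (Metric.ball (0 : Euc N) R),
      ‖x‖ = ‖y‖ → ψ x = ψ y := by
  intro x hx y hy hxy
  rcases eq_or_ne x y with rfl | hne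
  · rfl
  · haveI : Nonempty (Fin N) := ⟨⟨0, by omega⟩⟩
    set O : Euc N ≃ₗᵢ[ℝ] Euc N := Submodule.reflection (ℝ ∙ (x - y))ᗮ with hO
    have hOx : O x = y := Submodule.reflection_sub hxy
    have h := key_reflect hN hp hR hψ O x hx
    rw [hOx] at h
    exact h.symm
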